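/- Define ζ(M) = 1 − (1/M)·∑_{j=0}^{M−1} h(cos²(πj/(2M))) for integers M ≥ 2, where h is the binary entropy function. Then ζ(2) = 1/2, and for every integer M > 2 one has ζ(M) < 1/2. -/

import Mathlib

open Real Finset

/-- Binary entropy function `h(p) = −p·log₂ p − (1−p)·log₂(1−p)`
(with `h(0) = h(1) = 0`, automatic since `Real.logb 2 0 = 0`). -/
noncomputable def binEntropy2 (p : ℝ) : ℝ :=
  -p * Real.logb 2 p - (1 - p) * Real.logb 2 (1 - p)

/-- `ζ(M) = 1 − (1/M) ∑_{j=0}^{M−1} h(cos²(πj/(2M)))`. -/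
noncomputable def zetaPRB (M : ℕ) : ℝ :=
  1 - (1 / M) * ∑ j ∈ Finset.range M, binEntropy2 ((Real.cos (π * j / (2 * M))) ^ 2)

noncomputable def dAux (x : ℝ) : ℝ :=
  2 * Real.log 2 * x ^ 2 - ((1 + x) * Real.log (1 + x) + (1 - x) * Real.log (1 - x))

noncomputable def dAux' (x : ℝ) : ℝ :=
  4 * Real.log 2 * x - Real.log (1 + x) + Real.log (1 - x)

lemma log2_pos : (0:ℝ) < Real.log 2 := Real.log_pos (by norm_num)

lemma log2_gt_half : (1:ℝ)/2 < Real.log 2 := by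
  have := Real.log_two_gt_d9; linarith

lemma continuous_dAux : Continuous dAux := by
  unfold dAux
  have h1 : Continuous fun x : ℝ => (1 + x) * Real.log (1 + x) :=
    Real.continuous_mul_log.comp (continuous_const.add continuous_id)
  have h2 : Continuous fun x : ℝ => (1 - x) * Real.log (1 - x) :=
    Real.continuous_mul_log.comp (continuous_const.sub continuous_id)
  exact (continuous_const.mul (continuous_pow 2)).sub (h1.add h2)

lemma hasDerivAt_dAux {x : ℝ} (h1 : -1 < x) (h2 : x < 1) :
    HasDerivAt dAux (dAux' x) x := by
  have hp : (1:ℝ) + x ≠ 0 := by linarith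
  have hm : (1:ℝ) - x ≠ 0 := by linarith
  have d1 : HasDerivAt (fun y : ℝ => 1 + y) 1 x := (hasDerivAt_id x).const_add 1
  have d2 : HasDerivAt (fun y : ℝ => 1 - y) (-1) x := (hasDerivAt_id x).const_sub 1
  have dlog1 : HasDerivAt (fun y : ℝ => Real.log (1 + y)) ((1 + x)⁻¹) x := by
    have h := (Real.hasDerivAt_log hp).comp x d1
    rw [mul_one] at h
    exact h
  have dlog2 : HasDerivAt (fun y : ℝ => Real.log (1 - y)) (-(1 - x)⁻¹) x := by
    have h := (Real.hasDerivAt_log hm).comp x d2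
    rw [mul_neg_one] at h
    exact h
  have dA : HasDerivAt (fun y : ℝ => (1 + y) * Real.log (1 + y))
      (Real.log (1 + x) + 1) x := by
    have h := d1.mul dlog1
    exact h.congr_deriv (by rw [one_mul, mul_inv_cancel₀ hp])
  have dB : HasDerivAt (fun y : ℝ => (1 - y) * Real.log (1 - y))
      (-Real.log (1 - x) - 1) x := by
    have h := d2.mul dlog2
    exact h.congr_deriv (by rw [mul_neg, mul_inv_cancel₀ hm]; ring)
  have dsq : HasDerivAt (fun y : ℝ => 2 * Real.log 2 * y ^ 2)
      (2 * Real.log 2 * (2 * x)) x := by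
    simpa using ((hasDerivAt_pow 2 x).const_mul (2 * Real.log 2))
  have := dsq.sub (dA.add dB)
  exact this.congr_deriv (by unfold dAux'; ring)

lemma hasDerivAt_dAux' {x : ℝ} (h1 : -1 < x) (h2 : x < 1) :
    HasDerivAt dAux' (4 * Real.log 2 - (1 + x)⁻¹ - (1 - x)⁻¹) x := by
  have hp : (1:ℝ) + x ≠ 0 := by linarith
  have hm : (1:ℝ) - x ≠ 0 := by linarith
  have d1 : HasDerivAt (fun y : ℝ => 1 + y) 1 x := (hasDerivAt_id x).const_add 1
  have d2 : HasDerivAt (fun y : ℝ => 1 - y) (-1) x := (hasDerivAt_id x).const_sub 1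
  have dlog1 : HasDerivAt (fun y : ℝ => Real.log (1 + y)) ((1 + x)⁻¹) x := by
    have h := (Real.hasDerivAt_log hp).comp x d1
    rw [mul_one] at h
    exact h
  have dlog2 : HasDerivAt (fun y : ℝ => Real.log (1 - y)) (-(1 - x)⁻¹) x := by
    have h := (Real.hasDerivAt_log hm).comp x d2
    rw [mul_neg_one] at h
    exact h
  have dlin : HasDerivAt (fun y : ℝ => 4 * Real.log 2 * y) (4 * Real.log 2) x := by
    simpa using (hasDerivAt_id x).const_mul (4 * Real.log 2)
  have := (dlin.sub dlog1).add dlog2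
  exact this.congr_deriv (by ring)

/-- the inflection point -/
noncomputable def xInfl : ℝ := Real.sqrt (1 - 1 / (2 * Real.log 2))

lemma xInfl_sq : xInfl ^ 2 = 1 - 1 / (2 * Real.log 2) := by
  have h : (0:ℝ) ≤ 1 - 1 / (2 * Real.log 2) := by
    have := log2_gt_half
    have h2 : (1:ℝ) < 2 * Real.log 2 := by linarith
    have : 1 / (2 * Real.log 2) < 1 := by
      rw [div_lt_one (by linarith)]; linarith
    linarith
  exact Real.sq_sqrt h

lemma xInfl_pos : 0 < xInfl := by
  apply Real.sqrt_pos.2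
  have := log2_gt_half
  have h2 : (1:ℝ) < 2 * Real.log 2 := by linarith
  have : 1 / (2 * Real.log 2) < 1 := by
    rw [div_lt_one (by linarith)]; linarith
  linarith

lemma xInfl_lt_one : xInfl < 1 := by
  nlinarith [xInfl_sq, xInfl_pos, log2_pos,
    div_pos one_pos (mul_pos two_pos log2_pos)]

lemma dAux'_deriv_pos {y : ℝ} (h0 : 0 < y) (h1 : y < xInfl) :
    0 < 4 * Real.log 2 - (1 + y)⁻¹ - (1 - y)⁻¹ := by
  have hy1 : y < 1 := h1.trans xInfl_lt_one
  have hp : (0:ℝ) < 1 + y := by linarith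
  have hm : (0:ℝ) < 1 - y := by linarith
  have hsq : y ^ 2 < xInfl ^ 2 := by nlinarith [xInfl_pos]
  have hkey : 1 / (2 * Real.log 2) < 1 - y ^ 2 := by
    rw [xInfl_sq] at hsq; linarith
  have hne : (1:ℝ) - y ^ 2 ≠ 0 := by nlinarith
  have hinv : (1 + y)⁻¹ + (1 - y)⁻¹ = 2 / (1 - y ^ 2) := by
    rw [eq_div_iff hne]
    field_simp [ne_of_gt hp, ne_of_gt hm]
    ring
  have h4 : (0:ℝ) < 4 * Real.log 2 := by linarith [log2_pos]
  have hmul := mul_lt_mul_of_pos_left hkey h4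
  have heq : 4 * Real.log 2 * (1 / (2 * Real.log 2)) = 2 := by
    field_simp
    ring
  have h2 : 2 / (1 - y ^ 2) < 4 * Real.log 2 := by
    rw [div_lt_iff₀ (by nlinarith)]
    linarith
  linarith

lemma dAux'_deriv_neg {y : ℝ} (h0 : xInfl < y) (h1 : y < 1) :
    4 * Real.log 2 - (1 + y)⁻¹ - (1 - y)⁻¹ < 0 := by
  have hy0 : 0 < y := xInfl_pos.trans h0
  have hp : (0:ℝ) < 1 + y := by linarith
  have hm : (0:ℝ) < 1 - y := by linarith
  have hsq : xInfl ^ 2 < y ^ 2 := by nlinarith [xInfl_pos]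
  have hkey : 1 - y ^ 2 < 1 / (2 * Real.log 2) := by
    rw [xInfl_sq] at hsq; linarith
  have hne : (1:ℝ) - y ^ 2 ≠ 0 := by nlinarith
  have hinv : (1 + y)⁻¹ + (1 - y)⁻¹ = 2 / (1 - y ^ 2) := by
    rw [eq_div_iff hne]
    field_simp [ne_of_gt hp, ne_of_gt hm]
    ring
  have h4 : (0:ℝ) < 4 * Real.log 2 := by linarith [log2_pos]
  have hmul := mul_lt_mul_of_pos_left hkey h4
  have heq : 4 * Real.log 2 * (1 / (2 * Real.log 2)) = 2 := by
    field_simp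
    ring
  have h2 : 4 * Real.log 2 < 2 / (1 - y ^ 2) := by
    rw [lt_div_iff₀ (by nlinarith)]
    linarith
  linarith

lemma dAux'_pos {x : ℝ} (h0 : 0 < x) (h1 : x ≤ xInfl) : 0 < dAux' x := by
  have hmono : StrictMonoOn dAux' (Set.Icc 0 xInfl) := by
    apply strictMonoOn_of_deriv_pos (convex_Icc 0 xInfl)
    · intro y hy
      exact (hasDerivAt_dAux' (by linarith [hy.1]) (by
        linarith [hy.2, xInfl_lt_one])).continuousAt.continuousWithinAt
    · intro y hy
      rw [interior_Icc] at hy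
      rw [(hasDerivAt_dAux' (by linarith [hy.1])
        (by linarith [hy.2, xInfl_lt_one])).deriv]
      exact dAux'_deriv_pos hy.1 hy.2
  have h00 : dAux' 0 = 0 := by simp [dAux']
  have := hmono (Set.mem_Icc.2 ⟨le_refl 0, xInfl_pos.le⟩)
    (Set.mem_Icc.2 ⟨h0.le, h1⟩) h0
  rw [h00] at this
  exact this

lemma dAux_zero : dAux 0 = 0 := by simp [dAux]

lemma dAux_one : dAux 1 = 0 := by
  norm_num [dAux]

lemma dAux_pos_left {x : ℝ} (h0 : 0 < x) (h1 : x ≤ xInfl) : 0 < dAux x := by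
  have hmono : StrictMonoOn dAux (Set.Icc 0 xInfl) := by
    apply strictMonoOn_of_deriv_pos (convex_Icc 0 xInfl)
      continuous_dAux.continuousOn
    intro y hy
    rw [interior_Icc] at hy
    rw [(hasDerivAt_dAux (by linarith [hy.1])
      (by linarith [hy.2, xInfl_lt_one])).deriv]
    exact dAux'_pos hy.1 hy.2.le
  have := hmono (Set.mem_Icc.2 ⟨le_refl 0, xInfl_pos.le⟩)
    (Set.mem_Icc.2 ⟨h0.le, h1⟩) h0
  rwa [dAux_zero] at this

lemma dAux_concave : StrictConcaveOn ℝ (Set.Icc xInfl 1) dAux := by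
  apply StrictAntiOn.strictConcaveOn_of_deriv (convex_Icc _ _)
    continuous_dAux.continuousOn
  rw [interior_Icc]
  have hanti : StrictAntiOn dAux' (Set.Ioo xInfl 1) := by
    apply strictAntiOn_of_deriv_neg (convex_Ioo _ _)
    · intro y hy
      exact (hasDerivAt_dAux' (by linarith [xInfl_pos, hy.1])
        hy.2).continuousAt.continuousWithinAt
    · intro y hy
      rw [interior_Ioo] at hy
      rw [(hasDerivAt_dAux' (by linarith [xInfl_pos, hy.1]) hy.2).deriv]
      exact dAux'_deriv_neg hy.1 hy.2
  intro a ha b hb hab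
  rw [(hasDerivAt_dAux (by linarith [xInfl_pos, ha.1]) ha.2).deriv,
    (hasDerivAt_dAux (by linarith [xInfl_pos, hb.1]) hb.2).deriv]
  exact hanti ha hb hab

lemma dAux_pos {x : ℝ} (h0 : 0 < x) (h1 : x < 1) : 0 < dAux x := by
  rcases le_or_gt x xInfl with h | h
  · exact dAux_pos_left h0 h
  · have hx1 : dAux xInfl > 0 := dAux_pos_left xInfl_pos le_rfl
    set a : ℝ := (1 - x) / (1 - xInfl) with ha_def
    set b : ℝ := (x - xInfl) / (1 - xInfl) with hb_def
    have hden : (0:ℝ) < 1 - xInfl := by linarith [xInfl_lt_one]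
    have ha : 0 < a := div_pos (by linarith) hden
    have hb : 0 < b := div_pos (by linarith) hden
    have hab : a + b = 1 := by
      rw [ha_def, hb_def]
      field_simp
      ring
    have hcomb : a • xInfl + b • (1:ℝ) = x := by
      show a * xInfl + b * 1 = x
      rw [ha_def, hb_def]
      field_simp
      ring
    have hc := dAux_concave.2 (Set.mem_Icc.2 ⟨le_refl xInfl, xInfl_lt_one.le⟩)
      (Set.mem_Icc.2 ⟨xInfl_lt_one.le, le_refl 1⟩) (ne_of_lt xInfl_lt_one)
      ha hb hab
    rw [hcomb, dAux_one] at hc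
    have : a • dAux xInfl + b • (0:ℝ) = a * dAux xInfl := by
      show a * dAux xInfl + b * 0 = a * dAux xInfl
      ring
    rw [this] at hc
    nlinarith

lemma dAux_even (x : ℝ) : dAux (-x) = dAux x := by
  unfold dAux
  rw [show (1:ℝ) + -x = 1 - x by ring, show (1:ℝ) - -x = 1 + x by ring]
  ring

lemma dAux_nonneg {x : ℝ} (h0 : -1 ≤ x) (h1 : x ≤ 1) : 0 ≤ dAux x := by
  have key : ∀ y : ℝ, 0 ≤ y → y ≤ 1 → 0 ≤ dAux y := by
    intro y hy0 hy1
    rcases eq_or_lt_of_le hy0 with h | h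
    · rw [← h, dAux_zero]
    · rcases eq_or_lt_of_le hy1 with h' | h'
      · rw [h', dAux_one]
      · exact (dAux_pos h h').le
  rcases le_total 0 x with h | h
  · exact key x h h1
  · have := key (-x) (by linarith) (by linarith)
    rwa [dAux_even] at this

lemma binEntropy2_sub {x : ℝ} (h1 : -1 < x) (h2 : x < 1) :
    binEntropy2 ((1 + x) / 2) - (1 - x ^ 2) = dAux x / (2 * Real.log 2) := by
  have hp : (0:ℝ) < 1 + x := by linarith
  have hm : (0:ℝ) < 1 - x := by linarith
  have hl : Real.log 2 ≠ 0 := ne_of_gt log2_pos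
  unfold binEntropy2 dAux
  rw [Real.logb, Real.logb, show (1:ℝ) - (1 + x) / 2 = (1 - x) / 2 by ring,
    Real.log_div (ne_of_gt hp) two_ne_zero, Real.log_div (ne_of_gt hm) two_ne_zero]
  field_simp
  ring

lemma term_ge {x : ℝ} (h1 : -1 ≤ x) (h2 : x ≤ 1) :
    1 - x ^ 2 ≤ binEntropy2 ((1 + x) / 2) := by
  rcases eq_or_lt_of_le h1 with h | h
  · rw [← h]; norm_num [binEntropy2]
  · rcases eq_or_lt_of_le h2 with h' | h'
    · rw [h']; norm_num [binEntropy2]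
    · have := binEntropy2_sub h h'
      have hd := dAux_nonneg h1 h2
      have : 0 ≤ binEntropy2 ((1 + x) / 2) - (1 - x ^ 2) := by
        rw [this]
        positivity
      linarith

lemma term_gt {x : ℝ} (h1 : 0 < x) (h2 : x < 1) :
    1 - x ^ 2 < binEntropy2 ((1 + x) / 2) := by
  have heq := binEntropy2_sub (by linarith) h2
  have hd := dAux_pos h1 h2
  have : 0 < binEntropy2 ((1 + x) / 2) - (1 - x ^ 2) := by
    rw [heq]
    positivity
  linarith

lemma sum_cos_eq_zero (M : ℕ) (hM : 2 ≤ M) :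
    ∑ j ∈ Finset.range M, Real.cos (2 * π * j / M) = 0 := by
  have hM0 : (M:ℝ) ≠ 0 := by positivity
  have hM0' : (M:ℂ) ≠ 0 := by exact_mod_cast hM0
  set z : ℂ := Complex.exp (2 * π * Complex.I / M) with hz_def
  have h2piI : (2 * (π:ℂ) * Complex.I) ≠ 0 := by
    simp [Real.pi_ne_zero, Complex.I_ne_zero]
  have hz1 : z ≠ 1 := by
    intro h
    rw [hz_def, Complex.exp_eq_one_iff] at h
    obtain ⟨n, hn⟩ := h
    field_simp at hn
    have hcast : (2 * (π:ℂ) * Complex.I) * 1 = (2 * (π:ℂ) * Complex.I) * (n * M) := by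
      linear_combination (2 * (π:ℂ) * Complex.I) * hn
    have h1 : (1:ℂ) = n * M := mul_left_cancel₀ h2piI hcast
    have h2 : ((1:ℤ):ℂ) = ((n * M : ℤ):ℂ) := by push_cast; exact h1
    have h3 : (1:ℤ) = n * M := by exact_mod_cast h2
    have h4 : (M:ℤ) ∣ 1 := ⟨n, by linarith [h3]⟩
    have h5 := Int.le_of_dvd one_pos h4
    omega
  have hzM : z ^ M = 1 := by
    rw [hz_def, ← Complex.exp_nat_mul]
    have : (M:ℂ) * (2 * π * Complex.I / M) = 2 * π * Complex.I := by
      field_simp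
    rw [this, Complex.exp_two_pi_mul_I]
  have hsum : ∑ j ∈ Finset.range M, z ^ j = 0 := by
    rw [geom_sum_eq hz1, hzM]
    simp
  have hre : ∀ j : ℕ, (z ^ j).re = Real.cos (2 * π * j / M) := by
    intro j
    rw [hz_def, ← Complex.exp_nat_mul]
    have harg : (j:ℂ) * (2 * π * Complex.I / M) = ((2 * π * j / M : ℝ) : ℂ) * Complex.I := by
      push_cast
      field_simp
    rw [harg, Complex.exp_ofReal_mul_I_re]
  calc ∑ j ∈ Finset.range M, Real.cos (2 * π * j / M)
      = (∑ j ∈ Finset.range M, z ^ j).re := by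
        rw [Complex.re_sum]
        exact Finset.sum_congr rfl fun j _ => (hre j).symm
    _ = 0 := by rw [hsum]; rfl

lemma sum_sin_sq (M : ℕ) (hM : 2 ≤ M) :
    ∑ j ∈ Finset.range M, Real.sin (π * j / M) ^ 2 = M / 2 := by
  have h := sum_cos_eq_zero M hM
  have hterm : ∀ j : ℕ, Real.sin (π * j / M) ^ 2
      = 1 / 2 - Real.cos (2 * π * j / M) / 2 := by
    intro j
    have hc := Real.cos_sq (π * j / M)
    have hs := Real.sin_sq_add_cos_sq (π * j / M)
    have harg : 2 * (π * (j:ℝ) / M) = 2 * π * j / M := by ring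
    rw [harg] at hc
    linarith
  rw [Finset.sum_congr rfl fun j _ => hterm j, Finset.sum_sub_distrib,
    Finset.sum_const, Finset.card_range, ← Finset.sum_div, h]
  simp
  ring

lemma cos_sq_eq (M j : ℕ) (hM : (M:ℝ) ≠ 0) :
    Real.cos (π * j / (2 * M)) ^ 2 = (1 + Real.cos (π * j / M)) / 2 := by
  rw [Real.cos_sq]
  have : 2 * (π * (j:ℝ) / (2 * M)) = π * j / M := by
    field_simp
  rw [this]
  ring

theorem stmt9 : zetaPRB 2 = 1 / 2 ∧ ∀ M : ℕ, 2 < M → zetaPRB M < 1 / 2 := by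
  constructor
  · unfold zetaPRB
    rw [Finset.sum_range_succ, Finset.sum_range_one]
    have e0 : Real.cos (π * ((0:ℕ):ℝ) / (2 * ((2:ℕ):ℝ))) = 1 := by
      norm_num
    have e1arg : π * ((1:ℕ):ℝ) / (2 * ((2:ℕ):ℝ)) = π / 4 := by
      push_cast; ring
    have e1 : Real.cos (π * ((1:ℕ):ℝ) / (2 * ((2:ℕ):ℝ))) ^ 2 = 1 / 2 := by
      rw [e1arg, Real.cos_pi_div_four, div_pow, Real.sq_sqrt (by norm_num : (0:ℝ) ≤ 2)]
      norm_num
    rw [e0, e1]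
    have b1 : binEntropy2 (1 ^ 2) = 0 := by
      norm_num [binEntropy2]
    have b2 : binEntropy2 (1 / 2) = 1 := by
      unfold binEntropy2
      rw [show (1:ℝ) - 1 / 2 = 1 / 2 by norm_num]
      rw [show (1:ℝ) / 2 = 2⁻¹ by norm_num, Real.logb, Real.log_inv]
      field_simp
      norm_num
    rw [b1, b2]
    norm_num
  · intro M hM
    have hM2 : 2 ≤ M := hM.le
    have hMpos : (0:ℝ) < M := by positivity
    have hMne : (M:ℝ) ≠ 0 := ne_of_gt hMpos
    have hπ := Real.pi_pos
    have hterm : ∀ j ∈ Finset.range M,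
        Real.sin (π * j / M) ^ 2 ≤ binEntropy2 (Real.cos (π * j / (2 * M)) ^ 2) := by
      intro j _
      rw [cos_sq_eq M j hMne]
      have hc1 : -1 ≤ Real.cos (π * j / M) := Real.neg_one_le_cos _
      have hc2 : Real.cos (π * j / M) ≤ 1 := Real.cos_le_one _
      have := term_ge hc1 hc2
      have hs := Real.sin_sq_add_cos_sq (π * (j:ℝ) / M)
      calc Real.sin (π * j / M) ^ 2 = 1 - Real.cos (π * j / M) ^ 2 := by linarith
        _ ≤ binEntropy2 ((1 + Real.cos (π * j / M)) / 2) := this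
    have hstrict : Real.sin (π * (1:ℕ) / M) ^ 2
        < binEntropy2 (Real.cos (π * (1:ℕ) / (2 * M)) ^ 2) := by
      rw [cos_sq_eq M 1 hMne]
      have harg1 : (0:ℝ) < π * (1:ℕ) / M := by positivity
      have harg2 : π * ((1:ℕ):ℝ) / M < π / 2 := by
        rw [div_lt_div_iff₀ hMpos two_pos]
        push_cast
        nlinarith [show (3:ℝ) ≤ M by exact_mod_cast hM]
      have hc1 : 0 < Real.cos (π * (1:ℕ) / M) := by
        apply Real.cos_pos_of_mem_Ioo
        constructor
        · linarith
        · exact harg2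
      have hc2 : Real.cos (π * (1:ℕ) / M) < 1 := by
        have := Real.cos_lt_cos_of_nonneg_of_le_pi_div_two (le_refl 0)
          harg2.le harg1
        simpa using this
      have := term_gt hc1 hc2
      have hs := Real.sin_sq_add_cos_sq (π * ((1:ℕ):ℝ) / M)
      calc Real.sin (π * (1:ℕ) / M) ^ 2
          = 1 - Real.cos (π * (1:ℕ) / M) ^ 2 := by linarith
        _ < binEntropy2 ((1 + Real.cos (π * (1:ℕ) / M)) / 2) := this
    have hsumlt : (M:ℝ) / 2
        < ∑ j ∈ Finset.range M, binEntropy2 (Real.cos (π * j / (2 * M)) ^ 2) := by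
      rw [← sum_sin_sq M hM2]
      exact Finset.sum_lt_sum hterm ⟨1, Finset.mem_range.2 (by omega), hstrict⟩
    unfold zetaPRB
    have hmul := mul_lt_mul_of_pos_left hsumlt (show (0:ℝ) < 1 / M by positivity)
    have heq : 1 / (M:ℝ) * ((M:ℝ) / 2) = 1 / 2 := by
      field_simp
    linarith
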